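/- Define P1(v2,v3) = (1/3)·((v2/(v2+v3))·(v1/(v1+v2)) + (v3/(v2+v3))·(v1/(v1+v3))) + (2/3)·(v1/(v1+v2))·(v1/(v1+v3)) for fixed v1 > 0. Then the partial derivative of P1 with respect to v2 is nonpositive for all positive v1, v2, v3. -/

import Mathlib

theorem stmt_3 (v1 v2 v3 : ℝ) (h1 : 0 < v1) (h2 : 0 < v2) (h3 : 0 < v3) :
    deriv (fun t : ℝ =>
        (1/3) * ((t / (t + v3)) * (v1 / (v1 + t)) + (v3 / (t + v3)) * (v1 / (v1 + v3)))
        + (2/3) * ((v1 / (v1 + t)) * (v1 / (v1 + v3)))) v2 ≤ 0 := by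
  have ha : (0:ℝ) < v2 + v3 := by linarith
  have hb : (0:ℝ) < v1 + v2 := by linarith
  have hc : (0:ℝ) < v1 + v3 := by linarith
  have hu : HasDerivAt (fun t : ℝ => t / (t + v3))
      ((1 * (v2 + v3) - v2 * 1) / (v2 + v3) ^ 2) v2 :=
    (hasDerivAt_id v2).div ((hasDerivAt_id v2).add_const v3) ha.ne'
  have hw : HasDerivAt (fun t : ℝ => v1 / (v1 + t))
      ((0 * (v1 + v2) - v1 * 1) / (v1 + v2) ^ 2) v2 :=
    (hasDerivAt_const v2 v1).div ((hasDerivAt_id v2).const_add v1) hb.ne'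
  have hx : HasDerivAt (fun t : ℝ => v3 / (t + v3))
      ((0 * (v2 + v3) - v3 * 1) / (v2 + v3) ^ 2) v2 :=
    (hasDerivAt_const v2 v3).div ((hasDerivAt_id v2).add_const v3) ha.ne'
  have h : HasDerivAt (fun t : ℝ =>
        (1/3) * ((t / (t + v3)) * (v1 / (v1 + t)) + (v3 / (t + v3)) * (v1 / (v1 + v3)))
        + (2/3) * ((v1 / (v1 + t)) * (v1 / (v1 + v3))))
      ((1/3) * (((1 * (v2 + v3) - v2 * 1) / (v2 + v3) ^ 2) * (v1 / (v1 + v2))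
          + (v2 / (v2 + v3)) * ((0 * (v1 + v2) - v1 * 1) / (v1 + v2) ^ 2)
          + ((0 * (v2 + v3) - v3 * 1) / (v2 + v3) ^ 2) * (v1 / (v1 + v3)))
        + (2/3) * (((0 * (v1 + v2) - v1 * 1) / (v1 + v2) ^ 2) * (v1 / (v1 + v3)))) v2 := by
    have := (((hu.mul hw).add (hx.mul_const (v1 / (v1 + v3)))).const_mul (1/3)).add
      ((hw.mul_const (v1 / (v1 + v3))).const_mul (2/3))
    exact this
  rw [h.deriv]
  have key : (1/3) * (((1 * (v2 + v3) - v2 * 1) / (v2 + v3) ^ 2) * (v1 / (v1 + v2))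
          + (v2 / (v2 + v3)) * ((0 * (v1 + v2) - v1 * 1) / (v1 + v2) ^ 2)
          + ((0 * (v2 + v3) - v3 * 1) / (v2 + v3) ^ 2) * (v1 / (v1 + v3)))
        + (2/3) * (((0 * (v1 + v2) - v1 * 1) / (v1 + v2) ^ 2) * (v1 / (v1 + v3)))
      = -(v1 * (v1 * v3 ^ 2 + 2 * v2 ^ 2 * v3 + 3 * v1 * v2 ^ 2 + 6 * v1 * v2 * v3))
        / (3 * (v2 + v3) ^ 2 * (v1 + v2) ^ 2 * (v1 + v3)) := by
    field_simp
    ring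
  rw [key]
  apply div_nonpos_of_nonpos_of_nonneg
  · rw [neg_nonpos]
    positivity
  · positivity
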